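/- Let f be a real-valued function on the set of quantum states of a finite-dimensional Hilbert space satisfying the LAA inequalities |f(pρ+(1−p)σ) − p f(ρ) − (1−p)f(σ)| ≤ (a+b)(p) for nondecreasing vanishing-at-zero functions a,b on [0,1/2], and suppose f is bounded on the set of pure states: sup over unit vectors φ of |f(|φ⟩⟨φ|)| ≤ C. Then f is bounded on the set of states of rank at most m for every m, with |f(ρ)| ≤ C_m for a constant C_m depending only on C, m, a and b. -/

import Mathlib

open scoped ComplexOrder
open Matrix

lemma pure_posSemidef {n : Type} [Fintype n] (φ : n → ℂ) :
    (Matrix.vecMulVec φ (star φ)).PosSemidef := by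
  have h : Matrix.vecMulVec φ (star φ) = Matrix.replicateCol Unit φ * (Matrix.replicateCol Unit φ).conjTranspose := by
    rw [Matrix.vecMulVec_eq Unit, Matrix.conjTranspose_replicateCol]
  rw [h]
  exact Matrix.posSemidef_self_mul_conjTranspose _

lemma pure_trace {n : Type} [Fintype n] (φ : n → ℂ) :
    (Matrix.vecMulVec φ (star φ)).trace = ((∑ i, ‖φ i‖ ^ 2 : ℝ) : ℂ) := by
  simp [Matrix.trace, Matrix.diag, Matrix.vecMulVec_apply, Complex.mul_conj,
    Complex.normSq_eq_norm_sq]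

lemma psd_real_smul {n : Type} [Fintype n] {M : Matrix n n ℂ} (hM : M.PosSemidef)
    {c : ℝ} (hc : 0 ≤ c) : (c • M).PosSemidef := by
  have h : c • M = (c : ℂ) • M := by ext i j; simp [Matrix.smul_apply, Complex.real_smul]
  rw [h]
  refine ⟨?_, ?_⟩
  · unfold Matrix.IsHermitian
    rw [Matrix.conjTranspose_smul, hM.1]
    simp
  · intro x
    exact (hM.smul (a := (c : ℂ)) (by exact_mod_cast hc)).2 x

theorem stmt_8 (C : ℝ) (m : ℕ) (a b : ℝ → ℝ)
    (ha0 : a 0 = 0) (hb0 : b 0 = 0)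
    (hapos : ∀ p ∈ Set.Icc (0 : ℝ) 1, 0 ≤ a p)
    (hbpos : ∀ p ∈ Set.Icc (0 : ℝ) 1, 0 ≤ b p)
    (hamono : MonotoneOn a (Set.Icc 0 (1 / 2)))
    (hbmono : MonotoneOn b (Set.Icc 0 (1 / 2))) :
    ∃ Cm : ℝ, ∀ (n : Type) [Fintype n] [DecidableEq n] (f : Matrix n n ℂ → ℝ),
      (∀ ρ σ : Matrix n n ℂ, ρ.PosSemidef → σ.PosSemidef → ρ.trace = 1 → σ.trace = 1 →
        ∀ p ∈ Set.Icc (0 : ℝ) 1,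
          p * f ρ + (1 - p) * f σ - a p ≤ f (p • ρ + (1 - p) • σ) ∧
            f (p • ρ + (1 - p) • σ) ≤ p * f ρ + (1 - p) * f σ + b p) →
      (∀ φ : n → ℂ, ∑ i, ‖φ i‖ ^ 2 = 1 → |f (Matrix.vecMulVec φ (star φ))| ≤ C) →
      ∀ ρ : Matrix n n ℂ, ρ.PosSemidef → ρ.trace = 1 → ρ.rank ≤ m → |f ρ| ≤ Cm := by
  classical
  have h12 : (1/2 : ℝ) ∈ Set.Icc (0:ℝ) 1 := by norm_num
  have ha12 : 0 ≤ a (1/2) := hapos _ h12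
  have hb12 : 0 ≤ b (1/2) := hbpos _ h12
  obtain ⟨M, hMa, hMb, hM⟩ : ∃ M : ℝ, a (1/2) ≤ M ∧ b (1/2) ≤ M ∧ 0 ≤ M :=
    ⟨a (1/2) + b (1/2), by linarith, by linarith, by linarith⟩
  refine ⟨C + m * M, ?_⟩
  intro n _ _ f hLAA hpure
  -- absolute-value form of the LAA inequality for p ≤ 1/2
  have habs : ∀ ρ σ : Matrix n n ℂ, ρ.PosSemidef → σ.PosSemidef → ρ.trace = 1 → σ.trace = 1 →
      ∀ p : ℝ, 0 ≤ p → p ≤ 1/2 →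
      |f (p • ρ + (1 - p) • σ)| ≤ p * |f ρ| + (1 - p) * |f σ| + M := by
    intro ρ σ hρ hσ hρt hσt p hp0 hp12
    have hpIcc : p ∈ Set.Icc (0:ℝ) 1 := ⟨hp0, by linarith⟩
    obtain ⟨hlo, hhi⟩ := hLAA ρ σ hρ hσ hρt hσt p hpIcc
    have hap : a p ≤ a (1/2) := hamono ⟨hp0, hp12⟩ (by norm_num) hp12
    have hbp : b p ≤ b (1/2) := hbmono ⟨hp0, hp12⟩ (by norm_num) hp12
    have h1 : f ρ ≤ |f ρ| := le_abs_self _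
    have h2 : f σ ≤ |f σ| := le_abs_self _
    have h3 : -|f ρ| ≤ f ρ := neg_abs_le _
    have h4 : -|f σ| ≤ f σ := neg_abs_le _
    have e1 : p * (-|f ρ|) ≤ p * f ρ := mul_le_mul_of_nonneg_left h3 hp0
    have e2 : (1 - p) * (-|f σ|) ≤ (1 - p) * f σ := mul_le_mul_of_nonneg_left h4 (by linarith)
    have e3 : p * f ρ ≤ p * |f ρ| := mul_le_mul_of_nonneg_left h1 hp0
    have e4 : (1 - p) * f σ ≤ (1 - p) * |f σ| := mul_le_mul_of_nonneg_left h2 (by linarith)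
    rw [abs_le]
    constructor <;> nlinarith [abs_nonneg (f ρ), abs_nonneg (f σ)]
  -- key induction: convex combinations of at most k pure states
  have key : ∀ k : ℕ, ∀ (w : n → ℝ) (ψ : n → n → ℂ),
      (∀ i, 0 ≤ w i) → (∑ i, w i = 1) → (∀ i, ∑ j, ‖ψ i j‖ ^ 2 = 1) →
      (Finset.univ.filter (fun i => w i ≠ 0)).card ≤ k →
      |f (∑ i, w i • Matrix.vecMulVec (ψ i) (star (ψ i)))| ≤ C + k * M := by
    intro k
    induction k with
    | zero =>
      intro w ψ hw hsum hψ hcard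
      exfalso
      have : ∀ i, w i = 0 := by
        intro i
        by_contra hi
        have : i ∈ Finset.univ.filter (fun i => w i ≠ 0) := by simp [hi]
        have := Finset.card_pos.mpr ⟨i, this⟩
        omega
      simp [this] at hsum
    | succ k ih =>
      intro w ψ hw hsum hψ hcard
      set s := Finset.univ.filter (fun i => w i ≠ 0) with hs
      by_cases hk : s.card ≤ k
      · have := ih w ψ hw hsum hψ hk
        have : (k:ℝ) * M ≤ (k+1 : ℕ) * M := by push_cast; nlinarith
        push_cast at *
        linarith [ih w ψ hw hsum hψ hk]
      · have hcard' : s.card = k + 1 := by omega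
        by_cases h1 : s.card = 1
        · -- single pure state
          obtain ⟨i, hi⟩ := Finset.card_eq_one.mp h1
          have hwi : ∀ j, j ≠ i → w j = 0 := by
            intro j hj
            by_contra hjne
            have : j ∈ s := by simp [hs, hjne]
            rw [hi] at this
            exact hj (Finset.mem_singleton.mp this)
          have hwi1 : w i = 1 := by
            have := hsum
            rwa [Finset.sum_eq_single i (fun j _ hj => hwi j hj) (by simp)] at this
          have hrw : (∑ j, w j • Matrix.vecMulVec (ψ j) (star (ψ j)))
              = Matrix.vecMulVec (ψ i) (star (ψ i)) := by
            rw [Finset.sum_eq_single i (fun j _ hj => by rw [hwi j hj, zero_smul]) (by simp),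
              hwi1, one_smul]
          rw [hrw]
          have := hpure (ψ i) (hψ i)
          have : (0:ℝ) ≤ (k+1 : ℕ) * M := by positivity
          linarith [hpure (ψ i) (hψ i)]
        · -- at least two states in support; pick one with weight ≤ 1/2
          have h2 : 2 ≤ s.card := by omega
          have hex : ∃ i ∈ s, w i ≤ 1/2 := by
            by_contra hno
            push_neg at hno
            obtain ⟨i, hi, j, hj, hij⟩ := Finset.one_lt_card.mp (by omega : 1 < s.card)
            have hij2 : w i + w j ≤ ∑ x ∈ s, w x := by
              have : ({i, j} : Finset n) ⊆ s := by
                intro x hx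
                simp at hx
                rcases hx with h | h <;> subst h <;> assumption
              calc w i + w j = ∑ x ∈ ({i, j} : Finset n), w x := by
                    rw [Finset.sum_pair hij]
                _ ≤ ∑ x ∈ s, w x :=
                    Finset.sum_le_sum_of_subset_of_nonneg this (fun x _ _ => hw x)
            have hle : ∑ x ∈ s, w x ≤ ∑ x, w x :=
              Finset.sum_le_sum_of_subset_of_nonneg (Finset.subset_univ s) (fun x _ _ => hw x)
            have := hno i hi
            have := hno j hj
            linarith [hsum ▸ hle]
          obtain ⟨i, hiS, hip⟩ := hex
          set p : ℝ := w i with hpdef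
          have hp0 : 0 < p := by
            have : w i ≠ 0 := by simpa [hs] using hiS
            exact lt_of_le_of_ne (hw i) (Ne.symm this)
          have h1p : 0 < 1 - p := by linarith
          set w' : n → ℝ := fun j => if j = i then 0 else w j / (1 - p) with hw'def
          have hw'0 : ∀ j, 0 ≤ w' j := by
            intro j
            simp only [hw'def]
            split_ifs
            · exact le_refl 0
            · exact div_nonneg (hw j) h1p.le
          have hsum' : ∑ j, w' j = 1 := by
            have h0 : ∑ j, w' j = (∑ j, if j = i then 0 else w j) / (1 - p) := by
              rw [Finset.sum_div]
              refine Finset.sum_congr rfl fun j _ => ?_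
              simp only [hw'def]
              split_ifs with h
              · simp
              · rfl
            have h1 : (∑ j, if j = i then 0 else w j) = (∑ j, w j) - w i := by
              have e : ∀ j : n, (if j = i then (0:ℝ) else w j)
                  = w j - (if j = i then w j else 0) := by
                intro j; split_ifs <;> ring
              rw [Finset.sum_congr rfl fun j _ => e j, Finset.sum_sub_distrib,
                Finset.sum_ite_eq' Finset.univ i w, if_pos (Finset.mem_univ i)]
            rw [h0, h1, hsum]
            field_simp
            rfl
          have hcard'' : (Finset.univ.filter (fun j => w' j ≠ 0)).card ≤ k := by
            have hsub : Finset.univ.filter (fun j => w' j ≠ 0) ⊆ s.erase i := by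
              intro j hj
              simp only [Finset.mem_filter, Finset.mem_univ, true_and, hw'def] at hj
              rcases eq_or_ne j i with h | h
              · simp [h] at hj
              · refine Finset.mem_erase.mpr ⟨h, ?_⟩
                simp only [h, if_neg] at hj
                have : w j ≠ 0 := fun h0 => hj (by rw [h0]; simp)
                simp [hs, this]
            calc (Finset.univ.filter (fun j => w' j ≠ 0)).card ≤ (s.erase i).card :=
                  Finset.card_le_card hsub
              _ = s.card - 1 := Finset.card_erase_of_mem hiS
              _ ≤ k := by omega
          set σ : Matrix n n ℂ := ∑ j, w' j • Matrix.vecMulVec (ψ j) (star (ψ j)) with hσdef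
          have hσpsd : σ.PosSemidef := by
            rw [hσdef]
            refine Finset.sum_induction _ _ (fun A B hA hB => hA.add hB)
              Matrix.PosSemidef.zero (fun j _ => ?_)
            exact psd_real_smul (pure_posSemidef (ψ j)) (hw'0 j)
          have hσtr : σ.trace = 1 := by
            rw [hσdef, Matrix.trace_sum]
            have : ∀ j, (w' j • Matrix.vecMulVec (ψ j) (star (ψ j))).trace = ((w' j : ℝ) : ℂ) := by
              intro j
              rw [Matrix.trace_smul, pure_trace, hψ j]
              simp [Complex.real_smul]
            rw [Finset.sum_congr rfl fun j _ => this j]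
            rw [← Complex.ofReal_sum, hsum']
            simp
          have hPtr : (Matrix.vecMulVec (ψ i) (star (ψ i))).trace = 1 := by
            rw [pure_trace, hψ i]; simp
          have hrw : (∑ j, w j • Matrix.vecMulVec (ψ j) (star (ψ j)))
              = p • Matrix.vecMulVec (ψ i) (star (ψ i)) + (1 - p) • σ := by
            rw [hσdef, Finset.smul_sum]
            have hterm : ∀ j, (1 - p) • (w' j • Matrix.vecMulVec (ψ j) (star (ψ j)))
                = (if j = i then (0:ℝ) else w j) • Matrix.vecMulVec (ψ j) (star (ψ j)) := by
              intro j
              rw [smul_smul]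
              congr 1
              simp only [hw'def]
              split_ifs with h
              · ring
              · field_simp
            rw [Finset.sum_congr rfl fun j _ => hterm j]
            have hsingle : p • Matrix.vecMulVec (ψ i) (star (ψ i))
                = ∑ j, (if j = i then p else (0:ℝ)) • Matrix.vecMulVec (ψ j) (star (ψ j)) := by
              rw [Finset.sum_eq_single i (fun j _ hj => by rw [if_neg hj, zero_smul]) (by simp),
                if_pos rfl]
            rw [hsingle, ← Finset.sum_add_distrib]
            refine Finset.sum_congr rfl fun j _ => ?_
            rw [← add_smul]
            congr 1
            split_ifs with h
            · subst h; simp [hpdef]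
            · simp
          rw [hrw]
          have hPpsd := pure_posSemidef (ψ i)
          have hbd := habs _ σ hPpsd hσpsd hPtr hσtr p hp0.le hip
          have hfP : |f (Matrix.vecMulVec (ψ i) (star (ψ i)))| ≤ C := hpure (ψ i) (hψ i)
          have hfσ : |f σ| ≤ C + k * M := by
            rw [hσdef]
            exact ih w' ψ hw'0 hsum' hψ hcard''
          have e5 : p * |f (Matrix.vecMulVec (ψ i) (star (ψ i)))| ≤ p * C :=
            mul_le_mul_of_nonneg_left hfP hp0.le
          have e6 : (1 - p) * |f σ| ≤ (1 - p) * (C + k * M) :=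
            mul_le_mul_of_nonneg_left hfσ h1p.le
          have hkM : 0 ≤ (k:ℝ) * M := by positivity
          push_cast
          nlinarith
  -- main argument: spectral decomposition
  intro ρ hρ hρt hrank
  have hH : ρ.IsHermitian := hρ.1
  set U : Matrix n n ℂ := (Matrix.IsHermitian.eigenvectorUnitary hH : Matrix n n ℂ) with hUdef
  set w : n → ℝ := hH.eigenvalues with hwdef
  set ψ : n → n → ℂ := fun i j => U j i with hψdef
  have hUU : star U * U = 1 := Matrix.UnitaryGroup.star_mul_self _
  have hψunit : ∀ i, ∑ j, ‖ψ i j‖ ^ 2 = 1 := by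
    intro i
    have h1 : (star U * U) i i = 1 := by rw [hUU]; simp
    rw [Matrix.mul_apply] at h1
    have h2 : ∀ j, (star U) i j * U j i = ((‖U j i‖ ^ 2 : ℝ) : ℂ) := by
      intro j
      rw [Matrix.star_apply]
      rw [show (star (U j i)) = (starRingEnd ℂ) (U j i) from rfl]
      rw [mul_comm, Complex.mul_conj]
      simp [Complex.normSq_eq_norm_sq]
    rw [Finset.sum_congr rfl fun j _ => h2 j, ← Complex.ofReal_sum] at h1
    exact_mod_cast h1
  have hdecomp : ρ = ∑ i, w i • Matrix.vecMulVec (ψ i) (star (ψ i)) := by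
    ext j k
    nth_rewrite 1 [hH.spectral_theorem]
    rw [Unitary.conjStarAlgAut_apply, Matrix.sum_apply]
    rw [Matrix.mul_apply]
    have hL : ∀ x, (U * Matrix.diagonal (RCLike.ofReal ∘ hH.eigenvalues) : Matrix n n ℂ) j x
        = U j x * ((w x : ℝ) : ℂ) := by
      intro x
      rw [Matrix.mul_diagonal]
      rfl
    rw [Finset.sum_congr rfl fun x _ => by rw [hL x]]
    refine Finset.sum_congr rfl fun x _ => ?_
    rw [Matrix.smul_apply, Matrix.vecMulVec_apply]
    rw [Matrix.star_apply]
    simp only [hψdef, Pi.star_apply]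
    rw [Complex.real_smul]
    ring
  have hw0 : ∀ i, 0 ≤ w i := fun i => hρ.eigenvalues_nonneg i
  have hsumw : ∑ i, w i = 1 := by
    have htr : ρ.trace = ((∑ i, w i : ℝ) : ℂ) := by
      rw [hdecomp, Matrix.trace_sum]
      rw [Finset.sum_congr rfl fun i _ => by
        rw [Matrix.trace_smul, pure_trace, hψunit i, Complex.ofReal_one,
          Complex.real_smul, mul_one]]
      rw [← Complex.ofReal_sum]
    rw [hρt] at htr
    exact_mod_cast htr.symm
  have hcard : (Finset.univ.filter (fun i => w i ≠ 0)).card ≤ m := by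
    have h1 : ρ.rank = Fintype.card {i // hH.eigenvalues i ≠ 0} :=
      Matrix.IsHermitian.rank_eq_card_non_zero_eigs hH
    have h2 : Fintype.card {i // hH.eigenvalues i ≠ 0}
        = (Finset.univ.filter (fun i => w i ≠ 0)).card := by
      rw [Fintype.card_subtype]
    omega
  rw [hdecomp]
  exact key m w ψ hw0 hsumw hψunit hcard
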